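/- Let E be a nontrivial finite-dimensional real inner product space and Σ a finite set of nonzero vectors of E with s_α(Σ) = Σ for every α ∈ Σ, where s_α is the orthogonal reflection in α^⊥; let W be the subgroup of linear isometries of E generated by {s_α : α ∈ Σ}. Suppose α₁,…,αₙ ∈ Σ and ω₁,…,ωₙ is a basis of E with ⟨ω_i, α_j⟩ = δ_{ij}; let C = {x ∈ E : ⟨x, α_j⟩ ≥ 0 for all j}. Suppose m₁,…,mₙ are positive integers such that β := m₁α₁ + ⋯ + mₙαₙ belongs to Σ and |⟨x, α⟩| ≤ ⟨x, β⟩ for every α ∈ Σ and every x ∈ C (β is the highest root), and suppose that for every x ∈ E there exists w ∈ W with w(x) ∈ C (the Weyl chambers cover E). Let K = {x ∈ E : |⟨x,α⟩| ≤ π/2 for all α ∈ Σ}. Then every extreme point of K is of the form w((π/(2m_j))·ω_j) for some w ∈ W and some j ∈ {1,…,n}. (This is Lemma 3.16: Ext(Ω̄) ⊆ 𝒲((π/2){ω₁/m₁, …, ωₙ/mₙ}).) -/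

import Mathlib

open Real
open scoped RealInnerProductSpace

set_option maxHeartbeats 1000000 in
/-- Lemma 3.16: Ext(Ω̄) ⊆ 𝒲((π/2){ω₁/m₁, …, ωₙ/mₙ}). Here Σ is a finite
reflection-invariant set of nonzero vectors, α₁,…,αₙ ∈ Σ with dual basis
ω₁,…,ωₙ, C the corresponding closed Weyl chamber, β = Σ mⱼαⱼ the highest root,
and every point of E can be moved into C by the Weyl group W. -/
theorem extremePoints_subset_weyl_orbit_of_fundamental_weights
    {E : Type*} [NormedAddCommGroup E] [InnerProductSpace ℝ E]
    [FiniteDimensional ℝ E] [Nontrivial E]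
    (Φ : Set E) (hfin : Φ.Finite) (h0 : (0 : E) ∉ Φ)
    (hrefl : ∀ α ∈ Φ,
      (fun x : E => x - (2 * ⟪x, α⟫ / ⟪α, α⟫) • α) '' Φ = Φ)
    (W : Subgroup (E ≃ₗᵢ[ℝ] E))
    (hW : W = Subgroup.closure
      {w : E ≃ₗᵢ[ℝ] E | ∃ α ∈ Φ, ∀ x : E,
        w x = x - (2 * ⟪x, α⟫ / ⟪α, α⟫) • α})
    (n : ℕ) (hn : 1 ≤ n)
    (α : Fin n → E) (hα : ∀ j, α j ∈ Φ)
    (ω : Module.Basis (Fin n) ℝ E)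
    (hdual : ∀ i j : Fin n, ⟪ω i, α j⟫ = if i = j then 1 else 0)
    (C : Set E) (hC : C = {x : E | ∀ j : Fin n, 0 ≤ ⟪x, α j⟫})
    (m : Fin n → ℕ) (hm : ∀ j, 0 < m j)
    (β : E) (hβ : β = ∑ j, (m j : ℝ) • α j) (hβΦ : β ∈ Φ)
    (hhighest : ∀ γ ∈ Φ, ∀ x ∈ C, |⟪x, γ⟫| ≤ ⟪x, β⟫)
    (hcover : ∀ x : E, ∃ w ∈ W, (w : E ≃ₗᵢ[ℝ] E) x ∈ C)
    (K : Set E) (hK : K = {x : E | ∀ γ ∈ Φ, |⟪x, γ⟫| ≤ π / 2}) :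
    ∀ x ∈ Set.extremePoints ℝ K, ∃ w ∈ W, ∃ j : Fin n,
      x = (w : E ≃ₗᵢ[ℝ] E) ((π / (2 * (m j : ℝ))) • ω j) := by
  intro x hx
  -- W preserves Φ
  have hWΦ : ∀ w : E ≃ₗᵢ[ℝ] E, w ∈ W → ⇑w '' Φ = Φ := by
    intro w hw
    rw [hW] at hw
    induction hw using Subgroup.closure_induction with
    | mem g hg =>
        obtain ⟨a, ha, hga⟩ := hg
        have : ⇑g '' Φ = (fun x : E => x - (2 * ⟪x, a⟫ / ⟪a, a⟫) • a) '' Φ :=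
          Set.image_congr' (fun z => hga z)
        rw [this]; exact hrefl a ha
    | one => simp
    | mul g₁ g₂ _ _ h1 h2 =>
        have : ⇑(g₁ * g₂) = ⇑g₁ ∘ ⇑g₂ := rfl
        rw [this, Set.image_comp, h2, h1]
    | inv g _ h =>
        have h2 : ⇑g⁻¹ '' (⇑g '' Φ) = Φ := by
          rw [← Set.image_comp]
          have : ⇑g⁻¹ ∘ ⇑g = id := by funext z; simp
          rw [this, Set.image_id]
        rw [h] at h2; exact h2
  -- W preserves K
  have hKW : ∀ w : E ≃ₗᵢ[ℝ] E, w ∈ W → ∀ z ∈ K, w z ∈ K := by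
    intro w hw z hz
    rw [hK]
    intro γ hγ
    obtain ⟨δ, hδΦ, hδ⟩ : ∃ δ ∈ Φ, w δ = γ := by
      rw [← hWΦ w hw] at hγ; exact hγ
    have h1 : ⟪w z, γ⟫ = ⟪z, δ⟫ := by rw [← hδ]; exact w.inner_map_map z δ
    rw [h1]
    rw [hK] at hz
    exact hz δ hδΦ
  -- W preserves extreme points of K
  have hextW : ∀ w : E ≃ₗᵢ[ℝ] E, w ∈ W → ∀ z ∈ Set.extremePoints ℝ K,
      w z ∈ Set.extremePoints ℝ K := by
    intro w hw z hz
    obtain ⟨hzK, hzext⟩ := hz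
    refine ⟨hKW w hw z hzK, ?_⟩
    intro y₁ hy₁ y₂ hy₂ hseg
    obtain ⟨a, b, ha, hb, hab, habz⟩ := hseg
    have h1 : z ∈ openSegment ℝ (w⁻¹ y₁) (w⁻¹ y₂) := by
      refine ⟨a, b, ha, hb, hab, ?_⟩
      have := congrArg (⇑w⁻¹) habz
      simpa using this
    have h2 := hzext (hKW w⁻¹ (inv_mem hw) y₁ hy₁) (hKW w⁻¹ (inv_mem hw) y₂ hy₂) h1
    have := congrArg (⇑w) h2; simpa using this
  -- coordinates via the dual basis
  have hrep : ∀ (z : E) (j : Fin n), ω.repr z j = ⟪z, α j⟫ := by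
    intro z j
    conv_rhs => rw [← ω.sum_repr z]
    rw [sum_inner]
    simp only [real_inner_smul_left, hdual, mul_ite, mul_one, mul_zero]
    simp
  have hωβ : ∀ j : Fin n, ⟪ω j, β⟫ = (m j : ℝ) := by
    intro j
    rw [hβ, inner_sum]
    simp only [real_inner_smul_right, hdual, mul_ite, mul_one, mul_zero]
    simp
  -- membership in K from chamber membership and the highest-root bound
  have hCK : ∀ z : E, (∀ j, 0 ≤ ⟪z, α j⟫) → ⟪z, β⟫ ≤ π / 2 → z ∈ K := by
    intro z hz hzβ
    rw [hK]
    intro γ hγ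
    refine le_trans (hhighest γ hγ z ?_) hzβ
    rw [hC]; exact hz
  -- move x into the chamber
  obtain ⟨w₀, hw₀W, hw₀C⟩ := hcover x
  set y := w₀ x with hy
  have hyext : y ∈ Set.extremePoints ℝ K := hextW w₀ hw₀W x hx
  have hyK : y ∈ K := hyext.1
  have hyC : ∀ j, 0 ≤ ⟪y, α j⟫ := by rw [hC] at hw₀C; exact hw₀C
  have hyβ : ⟪y, β⟫ ≤ π / 2 := by
    rw [hK] at hyK
    exact le_trans (le_abs_self _) (hyK β hβΦ)
  have hyβ' : ⟪y, β⟫ = ∑ j, (m j : ℝ) * ⟪y, α j⟫ := by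
    rw [hβ, inner_sum]
    simp only [real_inner_smul_right]
  have hπ : (0 : ℝ) < π / 2 := by positivity
  -- the candidate extreme vectors lie in K
  have heC : ∀ j : Fin n, ∀ k : Fin n,
      ⟪(π / (2 * (m j : ℝ))) • ω j, α k⟫ = if j = k then π / (2 * (m j : ℝ)) else 0 := by
    intro j k
    rw [real_inner_smul_left, hdual, mul_ite, mul_one, mul_zero]
  have heK : ∀ j : Fin n, (π / (2 * (m j : ℝ))) • ω j ∈ K := by
    intro j
    have hmj : ((m j : ℝ)) ≠ 0 := by
      have := hm j; positivity
    refine hCK _ (fun k => ?_) ?_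
    · rw [heC]
      split <;> positivity
    · rw [real_inner_smul_left, hωβ]
      have : π / (2 * (m j : ℝ)) * (m j : ℝ) = π / 2 := by field_simp
      rw [this]
  -- y is nonzero
  have hy0 : y ≠ 0 := by
    intro h0'
    set j₀ : Fin n := ⟨0, hn⟩
    set e : E := (π / (2 * (m j₀ : ℝ))) • ω j₀ with he
    have heK' := heK j₀
    have hneK : -e ∈ K := by
      rw [hK] at heK' ⊢
      intro γ hγ
      rw [inner_neg_left, abs_neg]
      exact heK' γ hγ
    have hseg : y ∈ openSegment ℝ e (-e) := by
      refine ⟨1/2, 1/2, by norm_num, by norm_num, by norm_num, ?_⟩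
      rw [h0']
      module
    have h2 := hyext.2 heK' hneK hseg
    have he0 : e = 0 := h2.trans h0'
    have : ⟪e, α j₀⟫ = 0 := by rw [he0, inner_zero_left]
    rw [heC, if_pos rfl] at this
    have hmj : (0 : ℝ) < (m j₀ : ℝ) := by exact_mod_cast hm j₀
    have : (0:ℝ) < π / (2 * (m j₀ : ℝ)) := by positivity
    linarith [this]
  -- the β-pairing is positive
  have hS0 : 0 ≤ ⟪y, β⟫ := by
    rw [hyβ']
    refine Finset.sum_nonneg fun j _ => ?_
    have := hyC j
    positivity
  have hSpos : 0 < ⟪y, β⟫ := by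
    rcases hS0.lt_or_eq with h | h
    · exact h
    · exfalso
      apply hy0
      have hall : ∀ j : Fin n, ⟪y, α j⟫ = 0 := by
        intro j
        have hsum : ∑ k, (m k : ℝ) * ⟪y, α k⟫ = 0 := by rw [← hyβ', ← h]
        have := (Finset.sum_eq_zero_iff_of_nonneg (fun k _ => by
          have := hyC k; positivity)).mp hsum j (Finset.mem_univ j)
        have hmj : (0 : ℝ) < (m j : ℝ) := by exact_mod_cast hm j
        exact (mul_eq_zero.mp this).resolve_left (by positivity)
      have : ∀ j, ω.repr y j = 0 := fun j => by rw [hrep]; exact hall j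
      have hz := ω.sum_repr y
      rw [← hz]
      refine Finset.sum_eq_zero fun j _ => by rw [this j, zero_smul]
  -- the β-pairing equals π/2
  have hSeq : ⟪y, β⟫ = π / 2 := by
    by_contra hne
    have hlt : ⟪y, β⟫ < π / 2 := lt_of_le_of_ne hyβ hne
    set ε : ℝ := min ((π / 2 - ⟪y, β⟫) / ⟪y, β⟫) 1 with hε
    have hε0 : 0 < ε := by
      apply lt_min
      · apply div_pos (by linarith) hSpos
      · norm_num
    have hε1 : ε ≤ 1 := min_le_right _ _
    have hεS : (1 + ε) * ⟪y, β⟫ ≤ π / 2 := by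
      have h1 : ε ≤ (π / 2 - ⟪y, β⟫) / ⟪y, β⟫ := min_le_left _ _
      have := (le_div_iff₀ hSpos).mp h1
      nlinarith
    have hy₁ : (1 - ε) • y ∈ K := by
      refine hCK _ (fun k => ?_) ?_
      · rw [real_inner_smul_left]
        have := hyC k
        have : (0:ℝ) ≤ 1 - ε := by linarith
        nlinarith [hyC k]
      · rw [real_inner_smul_left]
        nlinarith
    have hy₂ : (1 + ε) • y ∈ K := by
      refine hCK _ (fun k => ?_) ?_
      · rw [real_inner_smul_left]
        nlinarith [hyC k]
      · rw [real_inner_smul_left]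
        linarith
    have hseg : y ∈ openSegment ℝ ((1 - ε) • y) ((1 + ε) • y) := by
      refine ⟨1/2, 1/2, by norm_num, by norm_num, by norm_num, ?_⟩
      module
    have h2 := hyext.2 hy₁ hy₂ hseg
    have : (1 - ε) • y = (1 : ℝ) • y := by rw [h2, one_smul]
    have hy0' : ((1 - ε) - 1) • y = 0 := by rw [sub_smul, this, sub_self]
    have : y = 0 := by
      rcases smul_eq_zero.mp hy0' with h | h
      · exfalso; have : (1 - ε) - 1 = -ε := by ring
        rw [this] at h; simp at h; linarith
      · exact h
    exact hy0 this
  -- at most one positive coordinate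
  have hone : ∀ i j : Fin n, 0 < ⟪y, α i⟫ → 0 < ⟪y, α j⟫ → i = j := by
    intro i j hi hj
    by_contra hij
    have hmi : (0 : ℝ) < (m i : ℝ) := by exact_mod_cast hm i
    have hmj : (0 : ℝ) < (m j : ℝ) := by exact_mod_cast hm j
    set u : E := (m i : ℝ)⁻¹ • ω i - (m j : ℝ)⁻¹ • ω j with hu
    have huα : ∀ k : Fin n, ⟪u, α k⟫ =
        (m i : ℝ)⁻¹ * (if i = k then 1 else 0) - (m j : ℝ)⁻¹ * (if j = k then 1 else 0) := by
      intro k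
      rw [hu, inner_sub_left, real_inner_smul_left, real_inner_smul_left, hdual, hdual]
    have huβ : ⟪u, β⟫ = 0 := by
      rw [hu, inner_sub_left, real_inner_smul_left, real_inner_smul_left, hωβ, hωβ]
      field_simp
      norm_num
    set ε : ℝ := min (⟪y, α i⟫ * (m i : ℝ)) (⟪y, α j⟫ * (m j : ℝ)) with hε
    have hε0 : 0 < ε := lt_min (by positivity) (by positivity)
    have hεi : ε * (m i : ℝ)⁻¹ ≤ ⟪y, α i⟫ := by
      have h1 : ε ≤ ⟪y, α i⟫ * (m i : ℝ) := min_le_left _ _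
      have h2 := mul_le_mul_of_nonneg_right h1 (inv_pos.mpr hmi).le
      rwa [mul_assoc, mul_inv_cancel₀ (ne_of_gt hmi), mul_one] at h2
    have hεj : ε * (m j : ℝ)⁻¹ ≤ ⟪y, α j⟫ := by
      have h1 : ε ≤ ⟪y, α j⟫ * (m j : ℝ) := min_le_right _ _
      have h2 := mul_le_mul_of_nonneg_right h1 (inv_pos.mpr hmj).le
      rwa [mul_assoc, mul_inv_cancel₀ (ne_of_gt hmj), mul_one] at h2
    have hcoord : ∀ (s : ℝ), |s| ≤ ε → ∀ k, 0 ≤ ⟪y + s • u, α k⟫ := by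
      intro s hs k
      rw [inner_add_left, real_inner_smul_left, huα]
      have habs₁ : -ε ≤ s := neg_le_of_abs_le hs
      have habs₂ : s ≤ ε := le_of_abs_le hs
      by_cases hik : i = k
      · have hjk : ¬ (j = k) := fun h => hij (hik.trans h.symm)
        rw [if_pos hik, if_neg hjk]
        have hyi : ⟪y, α k⟫ = ⟪y, α i⟫ := by rw [hik]
        rw [hyi]
        simp only [mul_one, mul_zero, sub_zero]
        have hpos : (0:ℝ) < (m i : ℝ)⁻¹ := by positivity
        have h4 := mul_le_mul_of_nonneg_right habs₁ hpos.le
        nlinarith [hεi, h4]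
      · by_cases hjk : j = k
        · rw [if_neg hik, if_pos hjk]
          have hyj : ⟪y, α k⟫ = ⟪y, α j⟫ := by rw [hjk]
          rw [hyj]
          simp only [mul_one, mul_zero, zero_sub]
          have hpos : (0:ℝ) < (m j : ℝ)⁻¹ := by positivity
          have h4 := mul_le_mul_of_nonneg_right habs₂ hpos.le
          nlinarith [hεj, h4]
        · rw [if_neg hik, if_neg hjk]
          have := hyC k
          simpa using this
    have hmemK : ∀ (s : ℝ), |s| ≤ ε → y + s • u ∈ K := by
      intro s hs
      refine hCK _ (hcoord s hs) ?_
      rw [inner_add_left, real_inner_smul_left, huβ, mul_zero, add_zero, hSeq]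
    have hy₁ := hmemK ε (by rw [abs_of_pos hε0])
    have hy₂ := hmemK (-ε) (by rw [abs_neg, abs_of_pos hε0])
    have hseg : y ∈ openSegment ℝ (y + ε • u) (y + (-ε) • u) := by
      refine ⟨1/2, 1/2, by norm_num, by norm_num, by norm_num, ?_⟩
      module
    have h2 := hyext.2 hy₁ hy₂ hseg
    have hu0 : ε • u = 0 := by
      have := h2
      have h3 : y + ε • u - y = 0 := by rw [this]; abel
      simpa using h3
    have : u = 0 := by
      rcases smul_eq_zero.mp hu0 with h | h
      · exact absurd h (ne_of_gt hε0)
      · exact h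
    have : ⟪u, α i⟫ = 0 := by rw [this, inner_zero_left]
    rw [huα, if_pos rfl, if_neg (fun h => hij h.symm)] at this
    rw [mul_one, mul_zero, sub_zero] at this
    exact (inv_pos.mpr hmi).ne' this
  -- find the unique positive coordinate
  have hexj : ∃ j : Fin n, 0 < ⟪y, α j⟫ := by
    by_contra hcon
    push_neg at hcon
    have hall : ∀ j, ⟪y, α j⟫ = 0 := fun j => le_antisymm (hcon j) (hyC j)
    have : ⟪y, β⟫ = 0 := by
      rw [hyβ']
      exact Finset.sum_eq_zero fun j _ => by rw [hall j, mul_zero]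
    rw [this] at hSpos
    exact lt_irrefl 0 hSpos
  obtain ⟨j, hj⟩ := hexj
  have hzero : ∀ i : Fin n, i ≠ j → ⟪y, α i⟫ = 0 := by
    intro i hij
    rcases (hyC i).lt_or_eq with h | h
    · exact absurd (hone i j h hj) hij
    · exact h.symm
  have hmj : (0 : ℝ) < (m j : ℝ) := by exact_mod_cast hm j
  have hcj : ⟪y, α j⟫ = π / (2 * (m j : ℝ)) := by
    have hsum : ∑ k, (m k : ℝ) * ⟪y, α k⟫ = π / 2 := by rw [← hyβ', hSeq]
    rw [Finset.sum_eq_single j (fun i _ hij => by rw [hzero i hij, mul_zero])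
      (fun h => absurd (Finset.mem_univ j) h)] at hsum
    field_simp at hsum ⊢
    linarith
  have hyval : y = (π / (2 * (m j : ℝ))) • ω j := by
    conv_lhs => rw [← ω.sum_repr y]
    rw [Finset.sum_eq_single j (fun i _ hij => by
        rw [hrep, hzero i hij, zero_smul])
      (fun h => absurd (Finset.mem_univ j) h)]
    rw [hrep, hcj]
  refine ⟨w₀⁻¹, inv_mem hw₀W, j, ?_⟩
  rw [← hyval, hy]
  simp
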